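/- Pointwise uniform bound on the DAR(1) score in terms of the innovation (combining inequalities (bound-1)–(p-l) of the paper): There exists a constant C, depending only on c₁, c₂, c₃, c₄, c₅, φ₀, ω₀, α₀, such that for all real numbers y and ε, setting x = φ₀ y + ε √(ω₀ + α₀ y²), the Gaussian quasi-log-likelihood l(θ) = -(1/2) log(ω + α y²) − (x − φ y)²/(2(ω + α y²)) satisfies, for every θ = (φ, ω, α) ∈ Θ, |∂l/∂φ(θ)| ≤ C(1 + ε²), |∂l/∂ω(θ)| ≤ C(1 + ε²), and |∂l/∂α(θ)| ≤ C(1 + ε²). -/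

import Mathlib

open MeasureTheory ProbabilityTheory

/-- DAR(1) parameter space `Θ = {(φ, ω, α) : |φ| ≤ c₁, c₂ ≤ ω ≤ c₃, c₄ ≤ α ≤ c₅}`. -/
def darTheta (c₁ c₂ c₃ c₄ c₅ : ℝ) : Set (ℝ × ℝ × ℝ) :=
  {θ | |θ.1| ≤ c₁ ∧ c₂ ≤ θ.2.1 ∧ θ.2.1 ≤ c₃ ∧ c₄ ≤ θ.2.2 ∧ θ.2.2 ≤ c₅}

/-- DAR(1) Gaussian quasi-log-likelihood
`l(θ) = -(1/2) log(ω + α Y²) − (X − φ Y)²/(2(ω + α Y²))` for `θ = (φ, ω, α)`. -/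
noncomputable def darL (Y X : ℝ) (θ : ℝ × ℝ × ℝ) : ℝ :=
  -(1 / 2) * Real.log (θ.2.1 + θ.2.2 * Y ^ 2)
    - (X - θ.1 * Y) ^ 2 / (2 * (θ.2.1 + θ.2.2 * Y ^ 2))

lemma darL_deriv (y X : ℝ) (θ : ℝ × ℝ × ℝ) (hs : 0 < θ.2.1 + θ.2.2 * y ^ 2) :
    fderiv ℝ (darL y X) θ (1,0,0) = (X - θ.1*y)*y/(θ.2.1+θ.2.2*y^2) ∧
    fderiv ℝ (darL y X) θ (0,1,0)
      = -(1/(2*(θ.2.1+θ.2.2*y^2))) + (X-θ.1*y)^2/(2*(θ.2.1+θ.2.2*y^2)^2) ∧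
    fderiv ℝ (darL y X) θ (0,0,1)
      = y^2 * (-(1/(2*(θ.2.1+θ.2.2*y^2))) + (X-θ.1*y)^2/(2*(θ.2.1+θ.2.2*y^2)^2)) := by
  set s : ℝ := θ.2.1 + θ.2.2 * y ^ 2 with hsdef
  set u : ℝ := X - θ.1 * y with hudef
  have hsne : s ≠ 0 := ne_of_gt hs
  have h2sne : 2 * s ≠ 0 := by positivity
  set L1 : (ℝ × ℝ × ℝ) →L[ℝ] ℝ := ContinuousLinearMap.fst ℝ ℝ (ℝ × ℝ) with hL1
  set L2 : (ℝ × ℝ × ℝ) →L[ℝ] ℝ :=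
    (ContinuousLinearMap.fst ℝ ℝ ℝ).comp (ContinuousLinearMap.snd ℝ ℝ (ℝ × ℝ)) with hL2
  set L3 : (ℝ × ℝ × ℝ) →L[ℝ] ℝ :=
    (ContinuousLinearMap.snd ℝ ℝ ℝ).comp (ContinuousLinearMap.snd ℝ ℝ (ℝ × ℝ)) with hL3
  have h1 : HasFDerivAt (fun θ : ℝ × ℝ × ℝ => θ.1) L1 θ := L1.hasFDerivAt
  have h2 : HasFDerivAt (fun θ : ℝ × ℝ × ℝ => θ.2.1) L2 θ := L2.hasFDerivAt
  have h3 : HasFDerivAt (fun θ : ℝ × ℝ × ℝ => θ.2.2) L3 θ := L3.hasFDerivAt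
  have hS : HasFDerivAt (fun θ : ℝ × ℝ × ℝ => θ.2.1 + θ.2.2 * y ^ 2)
      (L2 + (y ^ 2) • L3) θ := h2.add (h3.mul_const (y ^ 2))
  have hlog : HasFDerivAt (fun θ : ℝ × ℝ × ℝ => Real.log (θ.2.1 + θ.2.2 * y ^ 2))
      (s⁻¹ • (L2 + (y ^ 2) • L3)) θ := hS.log hsne
  have hU : HasFDerivAt (fun θ : ℝ × ℝ × ℝ => X - θ.1 * y) (-(y • L1)) θ :=
    (h1.mul_const y).const_sub X
  have hU2 : HasFDerivAt (fun θ : ℝ × ℝ × ℝ => (X - θ.1 * y) ^ 2)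
      (u • (-(y • L1)) + u • (-(y • L1))) θ := by
    have := hU.mul hU
    simpa [pow_two, hudef, Pi.mul_def] using this
  have h2S : HasFDerivAt (fun θ : ℝ × ℝ × ℝ => 2 * (θ.2.1 + θ.2.2 * y ^ 2))
      ((2 : ℝ) • (L2 + (y ^ 2) • L3)) θ := hS.const_mul 2
  have hinv : HasFDerivAt (fun θ : ℝ × ℝ × ℝ => (2 * (θ.2.1 + θ.2.2 * y ^ 2))⁻¹)
      ((-((2 * s) ^ 2)⁻¹) • ((2 : ℝ) • (L2 + (y ^ 2) • L3))) θ :=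
    (hasDerivAt_inv h2sne).comp_hasFDerivAt θ h2S
  have hfrac : HasFDerivAt
      (fun θ : ℝ × ℝ × ℝ => (X - θ.1 * y) ^ 2 * (2 * (θ.2.1 + θ.2.2 * y ^ 2))⁻¹)
      (u ^ 2 • ((-((2 * s) ^ 2)⁻¹) • ((2 : ℝ) • (L2 + (y ^ 2) • L3)))
        + (2 * s)⁻¹ • (u • (-(y • L1)) + u • (-(y • L1)))) θ := hU2.mul hinv
  have htot : HasFDerivAt (darL y X)
      (((-(1/2) : ℝ)) • (s⁻¹ • (L2 + (y ^ 2) • L3))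
        - (u ^ 2 • ((-((2 * s) ^ 2)⁻¹) • ((2 : ℝ) • (L2 + (y ^ 2) • L3)))
          + (2 * s)⁻¹ • (u • (-(y • L1)) + u • (-(y • L1))))) θ := by
    have heq : darL y X = fun θ : ℝ × ℝ × ℝ =>
        (-(1/2)) * Real.log (θ.2.1 + θ.2.2 * y ^ 2)
          - (X - θ.1 * y) ^ 2 * (2 * (θ.2.1 + θ.2.2 * y ^ 2))⁻¹ := by
      funext θ; simp [darL, div_eq_mul_inv]
    rw [heq]
    exact (hlog.const_mul (-(1/2))).sub hfrac
  rw [htot.fderiv]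
  refine ⟨?_, ?_, ?_⟩ <;>
  · simp only [ContinuousLinearMap.coe_sub', ContinuousLinearMap.add_apply,
      ContinuousLinearMap.coe_smul', ContinuousLinearMap.neg_apply, Pi.sub_apply,
      Pi.smul_apply, ContinuousLinearMap.smul_apply, ContinuousLinearMap.coe_comp',
      Function.comp_apply, ContinuousLinearMap.coe_fst', ContinuousLinearMap.coe_snd',
      hL1, hL2, hL3, smul_eq_mul]
    simp only [mul_zero, mul_one, zero_add, add_zero]
    field_simp
    ring

lemma aux_u (P Q R s w e c : ℝ) (hP : 0 ≤ P) (hQ : 0 ≤ Q) (hR : 0 ≤ R) (he : 0 ≤ e)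
    (hws : w ≤ s) (hcs : c ≤ s) (hw : 0 ≤ w) (hc : 0 ≤ c) :
    P * w + Q * e * c + R * e * w ≤ (P + Q + R) * (1 + e) * s := by
  nlinarith only [hP, hQ, hR, he, hws, hcs, hw, hc, mul_le_mul_of_nonneg_left hws hP,
    mul_le_mul_of_nonneg_left (mul_le_mul_of_nonneg_left hcs hQ) he,
    mul_le_mul_of_nonneg_left (mul_le_mul_of_nonneg_left hws hR) he,
    mul_nonneg (mul_nonneg hP he) (le_trans hw hws),
    mul_nonneg hQ (le_trans hc hcs), mul_nonneg hR (le_trans hw hws)]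

lemma aux_final (M a b E : ℝ) (hM : 0 < M) (ha : 0 < a) (hb : 0 < b) (hE : 1 ≤ E) :
    M * E / 2 + b / 2 ≤ (M + 1) * (a + b + 1) * E ∧
    a / 2 + M * E * a / 2 ≤ (M + 1) * (a + b + 1) * E ∧
    b / 2 + M * E * b / 2 ≤ (M + 1) * (a + b + 1) * E := by
  have hE0 : 0 < E := lt_of_lt_of_le one_pos hE
  refine ⟨?_, ?_, ?_⟩
  · nlinarith only [hM, ha, hb, hE, hE0, mul_pos hM hE0, mul_pos ha hE0, mul_pos hb hE0,
      mul_pos (mul_pos hM ha) hE0, mul_pos (mul_pos hM hb) hE0]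
  · nlinarith only [hM, ha, hb, hE, hE0, mul_pos hM hE0, mul_pos ha hE0, mul_pos hb hE0,
      mul_pos (mul_pos hM ha) hE0, mul_pos (mul_pos hM hb) hE0,
      mul_le_mul_of_nonneg_left hE ha.le]
  · nlinarith only [hM, ha, hb, hE, hE0, mul_pos hM hE0, mul_pos ha hE0, mul_pos hb hE0,
      mul_pos (mul_pos hM ha) hE0, mul_pos (mul_pos hM hb) hE0,
      mul_le_mul_of_nonneg_left hE hb.le]

set_option maxHeartbeats 1000000 in
/-- Pointwise uniform bound on the DAR(1) score in terms of the innovation (combining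
inequalities (bound-1)–(p-l)): there is a constant `C` depending only on the constants
`c₁,…,c₅, φ₀, ω₀, α₀` such that for all `y, ε`, with `x = φ₀ y + ε √(ω₀ + α₀ y²)`, the
partial derivatives of `l(θ)` in the `φ`-, `ω`- and `α`-directions are bounded by
`C(1 + ε²)` uniformly over `θ ∈ Θ`. -/
theorem stmt15 (c₁ c₂ c₃ c₄ c₅ : ℝ)
    (hc₁ : 0 < c₁) (hc₂ : 0 < c₂) (hc₃ : 0 < c₃) (hc₄ : 0 < c₄) (hc₅ : 0 < c₅)
    (φ₀ ω₀ α₀ : ℝ) (hθ₀ : (φ₀, ω₀, α₀) ∈ darTheta c₁ c₂ c₃ c₄ c₅) :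
    ∃ C : ℝ, ∀ y ε : ℝ, ∀ θ ∈ darTheta c₁ c₂ c₃ c₄ c₅,
      |fderiv ℝ (darL y (φ₀ * y + ε * Real.sqrt (ω₀ + α₀ * y ^ 2))) θ (1, 0, 0)|
          ≤ C * (1 + ε ^ 2) ∧
      |fderiv ℝ (darL y (φ₀ * y + ε * Real.sqrt (ω₀ + α₀ * y ^ 2))) θ (0, 1, 0)|
          ≤ C * (1 + ε ^ 2) ∧
      |fderiv ℝ (darL y (φ₀ * y + ε * Real.sqrt (ω₀ + α₀ * y ^ 2))) θ (0, 0, 1)|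
          ≤ C * (1 + ε ^ 2) := by
  obtain ⟨h01, h02, h03, h04, h05⟩ := hθ₀
  simp only at h01 h02 h03 h04 h05
  have hM : (0:ℝ) < 8 * c₁ ^ 2 / c₄ + 2 * c₃ / c₂ + 2 * c₅ / c₄ := by positivity
  obtain ⟨M, hMdef, hMpos⟩ : ∃ M : ℝ, M = 8 * c₁ ^ 2 / c₄ + 2 * c₃ / c₂ + 2 * c₅ / c₄ ∧ 0 < M :=
    ⟨_, rfl, hM⟩
  have hMc : M * c₂ * c₄ = 8 * c₁ ^ 2 * c₂ + 2 * c₃ * c₄ + 2 * c₅ * c₂ := by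
    rw [hMdef]; field_simp
  obtain ⟨a, hadef, hapos⟩ : ∃ a : ℝ, a = 1 / c₂ ∧ 0 < a := ⟨_, rfl, by positivity⟩
  obtain ⟨b, hbdef, hbpos⟩ : ∃ b : ℝ, b = 1 / c₄ ∧ 0 < b := ⟨_, rfl, by positivity⟩
  have hac : a * c₂ = 1 := by rw [hadef]; field_simp
  have hbc : b * c₄ = 1 := by rw [hbdef]; field_simp
  refine ⟨(M + 1) * (a + b + 1), fun y ε θ hθ => ?_⟩
  obtain ⟨h1, h2, h3, h4, h5⟩ := hθ
  have hy2 : (0:ℝ) ≤ y ^ 2 := sq_nonneg y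
  have hw : (0:ℝ) ≤ ω₀ + α₀ * y ^ 2 := by nlinarith only [mul_nonneg (le_trans hc₄.le h04) hy2, hc₂, h02]
  set r : ℝ := Real.sqrt (ω₀ + α₀ * y ^ 2) with hrdef
  have hr2 : r ^ 2 = ω₀ + α₀ * y ^ 2 := Real.sq_sqrt hw
  clear hrdef
  clear_value r
  have hspos : 0 < θ.2.1 + θ.2.2 * y ^ 2 := by
    nlinarith only [mul_nonneg (le_trans hc₄.le h4) hy2, hc₂, h2]
  obtain ⟨ed1, ed2, ed3⟩ := darL_deriv y (φ₀ * y + ε * r) θ hspos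
  rw [ed1, ed2, ed3]
  set s : ℝ := θ.2.1 + θ.2.2 * y ^ 2 with hsdef
  set u : ℝ := φ₀ * y + ε * r - θ.1 * y with hudef
  have hs2 : c₂ ≤ s := by rw [hsdef]; nlinarith only [mul_nonneg (le_trans hc₄.le h4) hy2, h2]
  have hs4 : c₄ * y ^ 2 ≤ s := by rw [hsdef]; nlinarith only [mul_le_mul_of_nonneg_right h4 hy2, h2, hc₂]
  have hE : (1:ℝ) ≤ 1 + ε ^ 2 := by nlinarith only [sq_nonneg ε]
  have hEpos : (0:ℝ) < 1 + ε ^ 2 := by positivity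
  have hφ : (φ₀ - θ.1) ^ 2 ≤ 4 * c₁ ^ 2 := by
    have ha1 := abs_le.mp h01
    have ha2 := abs_le.mp h1
    nlinarith only [ha1.1, ha1.2, ha2.1, ha2.2]
  have hwle : ω₀ + α₀ * y ^ 2 ≤ c₃ + c₅ * y ^ 2 := by
    nlinarith only [mul_le_mul_of_nonneg_right h05 hy2, h03]
  have hu2 : u ^ 2 ≤ 8 * c₁ ^ 2 * y ^ 2 + 2 * ε ^ 2 * (c₃ + c₅ * y ^ 2) := by
    rw [hudef]
    nlinarith only [sq_nonneg ((φ₀ - θ.1) * y - ε * r),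
      mul_le_mul_of_nonneg_right hφ hy2, sq_nonneg ε, sq_nonneg (ε * r),
      mul_le_mul_of_nonneg_left hwle (sq_nonneg ε), hr2]
  clear hsdef hudef hr2
  clear_value s u
  have hspos' : (0:ℝ) < s := lt_of_lt_of_le hc₂ hs2
  -- division facts
  have hF1 : 1 / s ≤ a := by
    rw [div_le_iff₀ hspos']
    nlinarith only [mul_le_mul_of_nonneg_left hs2 hapos.le, hac]
  have hF2 : y ^ 2 / s ≤ b := by
    rw [div_le_iff₀ hspos']
    nlinarith only [mul_le_mul_of_nonneg_left hs4 hbpos.le, hbc, hy2]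
  have hF3 : u ^ 2 / s ≤ M * (1 + ε ^ 2) := by
    rw [div_le_iff₀ hspos']
    have hcc : (0:ℝ) < c₂ * c₄ := mul_pos hc₂ hc₄
    have key : c₂ * c₄ * u ^ 2 ≤ c₂ * c₄ * (M * (1 + ε ^ 2) * s) := by
      have step1 : c₂ * c₄ * u ^ 2
          ≤ c₂ * c₄ * (8 * c₁ ^ 2 * y ^ 2 + 2 * ε ^ 2 * (c₃ + c₅ * y ^ 2)) :=
        mul_le_mul_of_nonneg_left hu2 hcc.le
      have step2 : (8 * c₁ ^ 2 * c₂) * (c₄ * y ^ 2) + (2 * c₃ * c₄) * ε ^ 2 * c₂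
            + (2 * c₅ * c₂) * ε ^ 2 * (c₄ * y ^ 2)
          ≤ ((8 * c₁ ^ 2 * c₂) + (2 * c₃ * c₄) + (2 * c₅ * c₂)) * (1 + ε ^ 2) * s := by
        refine aux_u _ _ _ _ _ _ _ (by positivity) (by positivity) (by positivity)
          (sq_nonneg ε) hs4 hs2 (by positivity) hc₂.le
      calc c₂ * c₄ * u ^ 2
          ≤ c₂ * c₄ * (8 * c₁ ^ 2 * y ^ 2 + 2 * ε ^ 2 * (c₃ + c₅ * y ^ 2)) := step1
        _ = (8 * c₁ ^ 2 * c₂) * (c₄ * y ^ 2) + (2 * c₃ * c₄) * ε ^ 2 * c₂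
            + (2 * c₅ * c₂) * ε ^ 2 * (c₄ * y ^ 2) := by ring
        _ ≤ ((8 * c₁ ^ 2 * c₂) + (2 * c₃ * c₄) + (2 * c₅ * c₂)) * (1 + ε ^ 2) * s := step2
        _ = (M * c₂ * c₄) * (1 + ε ^ 2) * s := by rw [hMc]
        _ = c₂ * c₄ * (M * (1 + ε ^ 2) * s) := by ring
    exact le_of_mul_le_mul_left key hcc
  refine ⟨?_, ?_, ?_⟩
  · have habs : |u * y / s| = |u * y| / s := by rw [abs_div, abs_of_pos hspos']
    have hb2 : |u * y| ≤ u ^ 2 / 2 + y ^ 2 / 2 := by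
      rw [abs_mul]
      nlinarith only [sq_nonneg (|u| - |y|), sq_abs u, sq_abs y, abs_nonneg u, abs_nonneg y]
    calc |u * y / s| = |u * y| / s := habs
      _ ≤ (u ^ 2 / 2 + y ^ 2 / 2) / s := by gcongr
      _ = (u ^ 2 / s) / 2 + (y ^ 2 / s) / 2 := by ring
      _ ≤ (M * (1 + ε ^ 2)) / 2 + b / 2 := by gcongr
      _ ≤ (M + 1) * (a + b + 1) * (1 + ε ^ 2) := by
          have := (aux_final M a b (1 + ε ^ 2) hMpos hapos hbpos hE).1
          linarith only [this]
  · have habs : |-(1 / (2 * s)) + u ^ 2 / (2 * s ^ 2)|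
        ≤ 1 / (2 * s) + u ^ 2 / (2 * s ^ 2) := by
      refine (abs_add_le _ _).trans ?_
      rw [abs_neg, abs_of_nonneg (by positivity), abs_of_nonneg (by positivity)]
    refine habs.trans ?_
    have e : 1 / (2 * s) + u ^ 2 / (2 * s ^ 2)
        = (1 / s) / 2 + (u ^ 2 / s) * (1 / s) / 2 := by
      field_simp
    rw [e]
    calc (1 / s) / 2 + (u ^ 2 / s) * (1 / s) / 2
        ≤ a / 2 + (M * (1 + ε ^ 2)) * a / 2 := by
          gcongr
      _ ≤ (M + 1) * (a + b + 1) * (1 + ε ^ 2) := by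
          have := (aux_final M a b (1 + ε ^ 2) hMpos hapos hbpos hE).2.1
          linarith only [this]
  · have habs : |y ^ 2 * (-(1 / (2 * s)) + u ^ 2 / (2 * s ^ 2))|
        ≤ y ^ 2 * (1 / (2 * s) + u ^ 2 / (2 * s ^ 2)) := by
      rw [abs_mul, abs_of_nonneg hy2]
      refine mul_le_mul_of_nonneg_left ?_ hy2
      refine (abs_add_le _ _).trans ?_
      rw [abs_neg, abs_of_nonneg (by positivity), abs_of_nonneg (by positivity)]
    refine habs.trans ?_
    have e : y ^ 2 * (1 / (2 * s) + u ^ 2 / (2 * s ^ 2))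
        = (y ^ 2 / s) / 2 + (u ^ 2 / s) * (y ^ 2 / s) / 2 := by
      field_simp
    rw [e]
    calc (y ^ 2 / s) / 2 + (u ^ 2 / s) * (y ^ 2 / s) / 2
        ≤ b / 2 + (M * (1 + ε ^ 2)) * b / 2 := by
          gcongr
      _ ≤ (M + 1) * (a + b + 1) * (1 + ε ^ 2) := by
          have := (aux_final M a b (1 + ε ^ 2) hMpos hapos hbpos hE).2.2
          linarith only [this]
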